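/- In ZM(m,n,r), the subgroup H = ⟨a^{m₁}, b^{n₁}⟩ (where m₁ | m and n₁ | n) is normal if and only if m₁ divides gcd(m, r^{n₁} − 1). -/

import Mathlib

def ZMrels (m n : ℕ) (r : ℤ) : Set (FreeGroup Bool) :=
  {FreeGroup.of true ^ m, FreeGroup.of false ^ n,
   (FreeGroup.of false)⁻¹ * FreeGroup.of true * FreeGroup.of false * (FreeGroup.of true) ^ (-r)}

abbrev ZM (m n : ℕ) (r : ℤ) : Type := PresentedGroup (ZMrels m n r)

def ZMa (m n : ℕ) (r : ℤ) : ZM m n r := PresentedGroup.of true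

def ZMb (m n : ℕ) (r : ℤ) : ZM m n r := PresentedGroup.of false

/-! ### Auxiliary constructions -/

section Model

variable (m n : ℕ)

/-- Multiplication by a unit as a `MulAut` of `Multiplicative (ZMod m)`. -/
def actUnit (v : (ZMod m)ˣ) : MulAut (Multiplicative (ZMod m)) where
  toFun x := Multiplicative.ofAdd ((v : ZMod m) * x.toAdd)
  invFun x := Multiplicative.ofAdd (((v⁻¹ : (ZMod m)ˣ) : ZMod m) * x.toAdd)
  left_inv x := by
    simp [← mul_assoc, ← Units.val_mul]
  right_inv x := by
    simp [← mul_assoc, ← Units.val_mul]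
  map_mul' x y := by
    simp [mul_add]

def actHom : (ZMod m)ˣ →* MulAut (Multiplicative (ZMod m)) where
  toFun := actUnit m
  map_one' := by ext x; simp [actUnit]
  map_mul' v w := by ext x; simp [actUnit, mul_assoc]

def powHom (u : (ZMod m)ˣ) (hu : u ^ n = 1) (hn : n ≠ 0) :
    Multiplicative (ZMod n) →* (ZMod m)ˣ where
  toFun j := u ^ (Multiplicative.toAdd j).val
  map_one' := by
    haveI : NeZero n := ⟨hn⟩
    simp
  map_mul' j k := by
    haveI : NeZero n := ⟨hn⟩
    show u ^ (Multiplicative.toAdd j + Multiplicative.toAdd k).val = _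
    rw [ZMod.val_add, ← pow_eq_pow_mod _ hu, pow_add]

def ZMphi (u : (ZMod m)ˣ) (hu : u ^ n = 1) (hn : n ≠ 0) :
    Multiplicative (ZMod n) →* MulAut (Multiplicative (ZMod m)) :=
  (actHom m).comp (powHom m n u hu hn)

lemma ZMphi_apply (u : (ZMod m)ˣ) (hu : u ^ n = 1) (hn : n ≠ 0)
    (j : Multiplicative (ZMod n)) (x : Multiplicative (ZMod m)) :
    ZMphi m n u hu hn j x =
      Multiplicative.ofAdd
        (((u ^ (Multiplicative.toAdd j).val : (ZMod m)ˣ) : ZMod m) * x.toAdd) := rfl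

end Model

section NormalizerAux

variable {G : Type*} [Group G]

lemma mem_normalizer_of_conj (S : Set G) (g : G)
    (h1 : ∀ s ∈ S, g * s * g⁻¹ ∈ Subgroup.closure S)
    (h2 : ∀ s ∈ S, g⁻¹ * s * g ∈ Subgroup.closure S) :
    g ∈ Subgroup.normalizer (Subgroup.closure S : Set G) := by
  have key : ∀ x : G, (∀ s ∈ S, x * s * x⁻¹ ∈ Subgroup.closure S) →
      ∀ h ∈ Subgroup.closure S, x * h * x⁻¹ ∈ Subgroup.closure S := by
    intro x hx h hh
    have hmap : (Subgroup.closure S).map ((MulAut.conj x).toMonoidHom) ≤ Subgroup.closure S := by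
      rw [MonoidHom.map_closure, Subgroup.closure_le]
      rintro _ ⟨s, hs, rfl⟩
      simpa [MulAut.conj] using hx s hs
    exact hmap ⟨h, hh, rfl⟩
  rw [Subgroup.mem_normalizer_iff]
  intro h
  constructor
  · intro hh; exact key g h1 h hh
  · intro hh
    have h3 := key g⁻¹ (by simpa using h2) (g * h * g⁻¹) hh
    simpa [mul_assoc] using h3

end NormalizerAux

section Relations

variable (m n : ℕ) (r : ℤ)

lemma ZM_rel_of_mem {x : FreeGroup Bool} (hx : x ∈ ZMrels m n r) :
    PresentedGroup.mk (ZMrels m n r) x = 1 := by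
  have : x ∈ Subgroup.normalClosure (ZMrels m n r) := Subgroup.subset_normalClosure hx
  exact (QuotientGroup.eq_one_iff x).mpr this

lemma ZMa_pow : (ZMa m n r) ^ m = 1 := by
  have := ZM_rel_of_mem m n r (x := FreeGroup.of true ^ m) (by simp [ZMrels])
  simpa [ZMa, PresentedGroup.of] using this

lemma ZMb_pow : (ZMb m n r) ^ n = 1 := by
  have := ZM_rel_of_mem m n r (x := FreeGroup.of false ^ n) (by simp [ZMrels])
  simpa [ZMb, PresentedGroup.of] using this

lemma ZM_conj : (ZMb m n r)⁻¹ * ZMa m n r * ZMb m n r = (ZMa m n r) ^ r := by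
  have := ZM_rel_of_mem m n r
    (x := (FreeGroup.of false)⁻¹ * FreeGroup.of true * FreeGroup.of false *
      (FreeGroup.of true) ^ (-r)) (by simp [ZMrels])
  have h : (ZMb m n r)⁻¹ * ZMa m n r * ZMb m n r * (ZMa m n r) ^ (-r) = 1 := by
    simpa [ZMa, ZMb, PresentedGroup.of] using this
  have := mul_eq_one_iff_eq_inv.mp h
  rwa [zpow_neg, inv_inv] at this

lemma ZM_conj_pow (k : ℕ) :
    ((ZMb m n r) ^ k)⁻¹ * ZMa m n r * (ZMb m n r) ^ k = (ZMa m n r) ^ (r ^ k) := by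
  induction k with
  | zero => simp
  | succ k ih =>
    have : ((ZMb m n r) ^ (k+1))⁻¹ * ZMa m n r * (ZMb m n r) ^ (k+1)
        = (ZMb m n r)⁻¹ * (((ZMb m n r) ^ k)⁻¹ * ZMa m n r * (ZMb m n r) ^ k) * ZMb m n r := by
      group
    rw [this, ih]
    have hc : (ZMb m n r)⁻¹ * (ZMa m n r) ^ (r ^ k) * ZMb m n r
        = ((ZMb m n r)⁻¹ * ZMa m n r * ((ZMb m n r)⁻¹)⁻¹) ^ (r ^ k) := by
      rw [conj_zpow]; group
    rw [hc, inv_inv, ZM_conj, ← zpow_mul]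
    congr 1
    ring

end Relations

theorem stmt3 (m n : ℕ) (r : ℤ) (hm : 0 < m) (hn : 0 < n)
    (hco : Nat.Coprime m n) (hco2 : IsCoprime (m : ℤ) (r - 1))
    (hr : (m : ℤ) ∣ r ^ n - 1)
    (m₁ n₁ : ℕ) (hm1 : m₁ ∣ m) (hn1 : n₁ ∣ n) :
    (Subgroup.closure {ZMa m n r ^ m₁, ZMb m n r ^ n₁} : Subgroup (ZM m n r)).Normal ↔
      m₁ ∣ Int.gcd (m : ℤ) (r ^ n₁ - 1) := by
  set a := ZMa m n r with ha_def
  set b := ZMb m n r with hb_def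
  set H : Subgroup (ZM m n r) := Subgroup.closure {a ^ m₁, b ^ n₁} with hH
  have hb_pow : b ^ n = 1 := ZMb_pow m n r
  have hkey : ∀ k : ℕ, (b ^ k)⁻¹ * a * b ^ k = a ^ (r ^ k) := ZM_conj_pow m n r
  have hAmem : a ^ m₁ ∈ H := Subgroup.subset_closure (by simp)
  have hBmem : b ^ n₁ ∈ H := Subgroup.subset_closure (by simp)
  constructor
  · -- normal → divisibility, via the semidirect product model
    intro hN
    -- the element a ^ (1 - r ^ n₁) lies in H
    have h1 : a⁻¹ * b ^ n₁ * a ∈ H := by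
      have := hN.conj_mem (b ^ n₁) hBmem a⁻¹
      simpa [mul_assoc] using this
    have h2 : (b ^ n₁)⁻¹ * (a⁻¹ * b ^ n₁ * a) ∈ H := H.mul_mem (H.inv_mem hBmem) h1
    have heq : (b ^ n₁)⁻¹ * (a⁻¹ * b ^ n₁ * a) = a ^ (1 - r ^ n₁) := by
      have h3 : (b ^ n₁)⁻¹ * a⁻¹ * b ^ n₁ = (a ^ (r ^ n₁))⁻¹ := by
        rw [← hkey n₁]; group
      calc (b ^ n₁)⁻¹ * (a⁻¹ * b ^ n₁ * a)
          = ((b ^ n₁)⁻¹ * a⁻¹ * b ^ n₁) * a := by group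
        _ = (a ^ (r ^ n₁))⁻¹ * a := by rw [h3]
        _ = a ^ (1 - r ^ n₁) := by
            rw [← zpow_neg, ← zpow_add_one]
            congr 1
            ring
    rw [heq] at h2
    -- build the model
    have hrm : ((r : ZMod m)) ^ n = 1 := by
      have : ((r ^ n - 1 : ℤ) : ZMod m) = 0 := by
        rw [ZMod.intCast_zmod_eq_zero_iff_dvd]; exact hr
      push_cast at this
      linear_combination this
    set u : (ZMod m)ˣ := Units.ofPowEqOne _ n hrm hn.ne' with hu_def
    have hu_val : (u : ZMod m) = (r : ZMod m) := rfl
    have hu : u ^ n = 1 := Units.pow_ofPowEqOne hrm hn.ne'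
    have huinv : u⁻¹ ^ n = 1 := by rw [inv_pow, hu]; simp
    set φ := ZMphi m n u⁻¹ huinv hn.ne' with hφ
    have hact : ∀ (j : Multiplicative (ZMod n)) (x : Multiplicative (ZMod m)),
        φ j x = Multiplicative.ofAdd
          (((u⁻¹ ^ (Multiplicative.toAdd j).val : (ZMod m)ˣ) : ZMod m) * x.toAdd) :=
      fun j x => rfl
    set K := SemidirectProduct (Multiplicative (ZMod m)) (Multiplicative (ZMod n)) φ with hK
    set sa : K := SemidirectProduct.inl (Multiplicative.ofAdd (1 : ZMod m)) with hsa
    set sb : K := SemidirectProduct.inr (Multiplicative.ofAdd (1 : ZMod n)) with hsb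
    haveI : NeZero n := ⟨hn.ne'⟩
    haveI : NeZero m := ⟨hm.ne'⟩
    -- the map Bool → K
    have hφb : ∀ x : Multiplicative (ZMod m),
        φ (Multiplicative.ofAdd (1 : ZMod n))⁻¹ x
          = Multiplicative.ofAdd ((r : ZMod m) * x.toAdd) := by
      intro x
      rw [show (Multiplicative.ofAdd (1 : ZMod n))⁻¹
        = Multiplicative.ofAdd (-1 : ZMod n) from rfl]
      rw [hact]
      congr 2
      -- (u⁻¹ ^ (-1 : ZMod n).val : ZMod m) = r
      have hdvd : n ∣ (Multiplicative.toAdd (Multiplicative.ofAdd (-1 : ZMod n))).val + 1 := by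
        rw [← ZMod.natCast_eq_zero_iff]
        push_cast
        rw [ZMod.natCast_val, ZMod.cast_id]
        simp
      obtain ⟨t, ht⟩ := hdvd
      have : u⁻¹ ^ ((Multiplicative.toAdd (Multiplicative.ofAdd (-1 : ZMod n))).val + 1) = 1 := by
        rw [ht, pow_mul, huinv, one_pow]
      have h5 : u⁻¹ ^ (Multiplicative.toAdd (Multiplicative.ofAdd (-1 : ZMod n))).val = u := by
        have := this
        rw [pow_succ] at this
        calc u⁻¹ ^ (Multiplicative.toAdd (Multiplicative.ofAdd (-1 : ZMod n))).val
            = (u⁻¹ ^ (Multiplicative.toAdd (Multiplicative.ofAdd (-1 : ZMod n))).val * u⁻¹) * u := by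
              group
          _ = u := by rw [this, one_mul]
      rw [h5, hu_val]
    have hrels : ∀ w ∈ ZMrels m n r,
        FreeGroup.lift (fun x : Bool => cond x sa sb) w = 1 := by
      intro w hw
      simp only [ZMrels, Set.mem_insert_iff, Set.mem_singleton_iff] at hw
      rcases hw with rfl | rfl | rfl
      · rw [map_pow, FreeGroup.lift_apply_of]
        show sa ^ m = 1
        rw [hsa, ← map_pow]
        have : (Multiplicative.ofAdd (1 : ZMod m)) ^ m = 1 := by
          rw [← ofAdd_nsmul]
          simp
        rw [this, map_one]
      · rw [map_pow, FreeGroup.lift_apply_of]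
        show sb ^ n = 1
        rw [hsb, ← map_pow]
        have : (Multiplicative.ofAdd (1 : ZMod n)) ^ n = 1 := by
          rw [← ofAdd_nsmul]
          simp
        rw [this, map_one]
      · simp only [map_mul, map_inv, map_zpow, FreeGroup.lift_apply_of]
        show sb⁻¹ * sa * sb * sa ^ (-r) = 1
        have hconj : sb⁻¹ * sa * sb
            = SemidirectProduct.inl (φ (Multiplicative.ofAdd (1 : ZMod n))⁻¹
                (Multiplicative.ofAdd (1 : ZMod m))) := by
          rw [hsa, hsb, SemidirectProduct.inl_aut]
          rw [← map_inv]
          group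
        rw [hconj, hφb]
        rw [hsa, ← map_zpow, ← map_mul]
        have : Multiplicative.ofAdd ((r : ZMod m) * Multiplicative.toAdd
            (Multiplicative.ofAdd (1 : ZMod m))) *
            (Multiplicative.ofAdd (1 : ZMod m)) ^ (-r) = 1 := by
          rw [← ofAdd_zsmul]
          rw [← ofAdd_add]
          simp
        rw [this, map_one]
    set F : ZM m n r →* K := PresentedGroup.toGroup hrels with hF
    have hFa : F a = sa := PresentedGroup.toGroup.of hrels
    have hFb : F b = sb := PresentedGroup.toGroup.of hrels
    -- the subgroup S of K
    set S : Subgroup K :=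
      { carrier := {g : K | ∃ c : ZMod m, (g.left).toAdd = (m₁ : ZMod m) * c}
        one_mem' := ⟨0, by simp⟩
        mul_mem' := by
          rintro g h ⟨c, hc⟩ ⟨d, hd⟩
          refine ⟨c + ((u⁻¹ ^ (Multiplicative.toAdd g.right).val : (ZMod m)ˣ) : ZMod m) * d, ?_⟩
          rw [SemidirectProduct.mul_left]
          rw [toAdd_mul, hact]
          simp only [toAdd_ofAdd]
          rw [hc, hd]
          ring
        inv_mem' := by
          rintro g ⟨c, hc⟩
          refine ⟨-(((u⁻¹ ^ (Multiplicative.toAdd g.right⁻¹).val : (ZMod m)ˣ) : ZMod m) * c), ?_⟩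
          rw [SemidirectProduct.inv_left, hact]
          simp only [toAdd_ofAdd, toAdd_inv]
          rw [hc]
          ring } with hS
    have hmapS : H.map F ≤ S := by
      rw [hH, MonoidHom.map_closure, Subgroup.closure_le]
      rintro _ ⟨x, hx, rfl⟩
      simp only [Set.mem_insert_iff, Set.mem_singleton_iff] at hx
      rcases hx with rfl | rfl
      · show F (a ^ m₁) ∈ S
        rw [map_pow, hFa]
        refine ⟨1, ?_⟩
        rw [hsa, ← map_pow]
        simp only [SemidirectProduct.left_inl]
        rw [← ofAdd_nsmul]
        simp
      · show F (b ^ n₁) ∈ S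
        rw [map_pow, hFb]
        refine ⟨0, ?_⟩
        rw [hsb, ← map_pow, SemidirectProduct.left_inr]
        simp
    have h6 : F (a ^ (1 - r ^ n₁)) ∈ S := hmapS ⟨_, h2, rfl⟩
    rw [map_zpow, hFa] at h6
    obtain ⟨c, hc⟩ := h6
    rw [hsa, ← map_zpow] at hc
    simp only [SemidirectProduct.left_inl] at hc
    rw [← ofAdd_zsmul] at hc
    simp only [toAdd_ofAdd, zsmul_eq_mul, mul_one] at hc
    -- now hc : ((1 - r ^ n₁ : ℤ) : ZMod m) = m₁ * c
    have hzero : ((1 - r ^ n₁ - m₁ * (c.val : ℤ) : ℤ) : ZMod m) = 0 := by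
      have hc' := hc
      push_cast at hc' ⊢
      rw [ZMod.natCast_val, ZMod.cast_id]
      linear_combination hc'
    rw [ZMod.intCast_zmod_eq_zero_iff_dvd] at hzero
    have hm1' : (m₁ : ℤ) ∣ 1 - r ^ n₁ := by
      have d1 : (m₁ : ℤ) ∣ (m : ℤ) := Int.natCast_dvd_natCast.mpr hm1
      have d2 : (m₁ : ℤ) ∣ 1 - r ^ n₁ - m₁ * (c.val : ℤ) := dvd_trans d1 hzero
      have d3 : (m₁ : ℤ) ∣ (m₁ : ℤ) * (c.val : ℤ) := Dvd.intro _ rfl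
      have := dvd_add d2 d3
      simpa using this
    have : (m₁ : ℤ) ∣ r ^ n₁ - 1 := by
      rw [show (r ^ n₁ - 1 : ℤ) = -(1 - r ^ n₁) by ring]
      exact dvd_neg.mpr hm1'
    have hgcd : (m₁ : ℤ) ∣ (Int.gcd (m : ℤ) (r ^ n₁ - 1) : ℤ) :=
      Int.dvd_coe_gcd (Int.natCast_dvd_natCast.mpr hm1) this
    exact_mod_cast hgcd
  · -- divisibility → normal
    intro hdvd
    have hdvd' : (m₁ : ℤ) ∣ r ^ n₁ - 1 := by
      calc (m₁ : ℤ) ∣ (Int.gcd (m : ℤ) (r ^ n₁ - 1) : ℤ) := Int.natCast_dvd_natCast.mpr hdvd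
        _ ∣ r ^ n₁ - 1 := Int.gcd_dvd_right _ _
    obtain ⟨t, ht⟩ := hdvd'
    -- conj of a by powers of b
    have hbab : b * a * b⁻¹ = a ^ (r ^ (n - 1)) := by
      have hb1 : b ^ (n - 1) = b⁻¹ := by
        have : b ^ (n - 1) * b = 1 := by
          rw [← pow_succ, Nat.sub_add_cancel hn]
          exact hb_pow
        exact eq_inv_of_mul_eq_one_left this
      have := hkey (n - 1)
      rw [hb1] at this
      rw [inv_inv] at this
      exact this
    -- the main conjugation computations
    have habm : a * (b ^ n₁) * a⁻¹ ∈ H := by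
      have heq : a * b ^ n₁ * a⁻¹ = b ^ n₁ * (a ^ m₁) ^ t := by
        have h3 : a = b ^ n₁ * a ^ (r ^ n₁) * (b ^ n₁)⁻¹ := by
          rw [← hkey n₁]; group
        calc a * b ^ n₁ * a⁻¹
            = b ^ n₁ * (((b ^ n₁)⁻¹ * a * b ^ n₁) * a⁻¹) := by group
          _ = b ^ n₁ * (a ^ (r ^ n₁) * a⁻¹) := by rw [hkey n₁]
          _ = b ^ n₁ * a ^ (r ^ n₁ - 1) := by
              rw [← zpow_sub_one]
          _ = b ^ n₁ * (a ^ m₁) ^ t := by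
              rw [ht, ← zpow_natCast a m₁, ← zpow_mul]
      rw [heq]
      exact H.mul_mem hBmem (H.zpow_mem hAmem t)
    have habm' : a⁻¹ * (b ^ n₁) * a ∈ H := by
      have heq : a⁻¹ * b ^ n₁ * a = b ^ n₁ * (a ^ m₁) ^ (-t) := by
        have h3 : (b ^ n₁)⁻¹ * a⁻¹ * b ^ n₁ = (a ^ (r ^ n₁))⁻¹ := by
          rw [← hkey n₁]; group
        calc a⁻¹ * b ^ n₁ * a
            = b ^ n₁ * (((b ^ n₁)⁻¹ * a⁻¹ * b ^ n₁) * a) := by group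
          _ = b ^ n₁ * ((a ^ (r ^ n₁))⁻¹ * a) := by rw [h3]
          _ = b ^ n₁ * a ^ (1 - r ^ n₁) := by
              congr 1
              rw [← zpow_neg, ← zpow_add_one]
              congr 1
              ring
          _ = b ^ n₁ * (a ^ m₁) ^ (-t) := by
              rw [show (1 - r ^ n₁ : ℤ) = (m₁ : ℤ) * (-t) by rw [← neg_sub, ht]; ring]
              rw [← zpow_natCast a m₁, ← zpow_mul]
      rw [heq]
      exact H.mul_mem hBmem (H.zpow_mem hAmem (-t))
    have hbam : b * (a ^ m₁) * b⁻¹ ∈ H := by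
      have heq : b * a ^ m₁ * b⁻¹ = (a ^ m₁) ^ (r ^ (n-1)) := by
        calc b * a ^ m₁ * b⁻¹ = (b * a * b⁻¹) ^ m₁ := by rw [conj_pow]
          _ = (a ^ (r ^ (n-1))) ^ m₁ := by rw [hbab]
          _ = (a ^ m₁) ^ (r ^ (n-1)) := by
              rw [← zpow_natCast (a ^ (r ^ (n-1))) m₁, ← zpow_mul, mul_comm,
                zpow_mul, zpow_natCast]
      rw [heq]
      exact H.zpow_mem hAmem _
    have hbam' : b⁻¹ * (a ^ m₁) * b ∈ H := by
      have heq : b⁻¹ * a ^ m₁ * b = (a ^ m₁) ^ r := by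
        have h1 : b⁻¹ * a ^ m₁ * b = (b⁻¹ * a * b) ^ m₁ := by
          rw [show b⁻¹ * a * b = b⁻¹ * a * (b⁻¹)⁻¹ by rw [inv_inv], conj_pow, inv_inv]
        rw [h1, ZM_conj m n r]
        rw [← zpow_natCast (a ^ r) m₁, ← zpow_mul, mul_comm, zpow_mul, zpow_natCast]
      rw [heq]
      exact H.zpow_mem hAmem r
    -- conclude normality
    rw [← Subgroup.normalizer_eq_top_iff]
    rw [eq_top_iff, ← PresentedGroup.closure_range_of (ZMrels m n r), Subgroup.closure_le]
    rintro _ ⟨i, rfl⟩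
    cases i
    · -- of false = b
      show b ∈ Subgroup.normalizer (H : Set (ZM m n r))
      apply mem_normalizer_of_conj
      · rintro s (rfl | rfl)
        · exact hbam
        · have heq : b * b ^ n₁ * b⁻¹ = b ^ n₁ := by group
          rw [heq]; exact hBmem
      · rintro s (rfl | rfl)
        · exact hbam'
        · have heq : b⁻¹ * b ^ n₁ * b = b ^ n₁ := by group
          rw [heq]; exact hBmem
    · -- of true = a
      show a ∈ Subgroup.normalizer (H : Set (ZM m n r))
      apply mem_normalizer_of_conj
      · rintro s (rfl | rfl)
        · have heq : a * a ^ m₁ * a⁻¹ = a ^ m₁ := by group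
          rw [heq]; exact hAmem
        · exact habm
      · rintro s (rfl | rfl)
        · have heq : a⁻¹ * a ^ m₁ * a = a ^ m₁ := by group
          rw [heq]; exact hAmem
        · exact habm'
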